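/- In the polynomial ring 𝔽₃[x₁,…,x₅], let y_i(x) = Σ_{j=1}^{5} 𝓡_{ij} x_j (entries of 𝓡 reduced mod 3), and set c = x₅² + 2x₄² + 2x₂x₄ + x₁x₄ + x₃² + x₂x₃ + 2x₁x₃. Then for every homogeneous polynomial P(X,Y) of degree 2 in 𝔽₃[X,Y], the polynomial c − Σ_{i=1}^{5} (−1)^{i−1} P(x_i, y_i(x)) is nonzero in 𝔽₃[x₁,…,x₅]. (Hence the hexagon 4-cocycle e²+2d²+2bd+ad+c²+bc+2ac is cohomologically nontrivial, so H⁴_{3,2} ≠ 0.) -/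

import Mathlib

open MvPolynomial

def Rmat : Matrix (Fin 5) (Fin 5) ℤ :=
  !![0, -2, 1, 1, -2;
     0, -1, 0, 1, -1;
     -1, 2, -2, 0, 1;
     -1, 3, -2, -1, 2;
     0, 1, -1, 0, 0]

noncomputable def yPoly (p : ℕ) (i : Fin 5) : MvPolynomial (Fin 5) (ZMod p) :=
  ∑ j : Fin 5, C ((Rmat i j : ℤ) : ZMod p) * X j

noncomputable def coc : MvPolynomial (Fin 5) (ZMod 3) :=
  X 4 ^ 2 + 2 * X 3 ^ 2 + 2 * X 1 * X 3 + X 0 * X 3 + X 2 ^ 2 + X 1 * X 2 + 2 * X 0 * X 2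

/-- evaluation point -/
def vpt : Fin 5 → ZMod 3 := ![0, 1, 0, 0, 1]

lemma eval_zero_of_hom (P : MvPolynomial (Fin 2) (ZMod 3)) (hP : P.IsHomogeneous 2) :
    eval (fun _ => (0 : ZMod 3)) P = 0 := by
  rw [eval_eq]
  apply Finset.sum_eq_zero
  intro d hd
  have hdeg : d.degree = 2 := by
    by_contra h
    exact (mem_support_iff.mp hd) (hP.coeff_eq_zero h)
  have : d ≠ 0 := by
    intro h; rw [h] at hdeg; simp [Finsupp.degree] at hdeg
  obtain ⟨i, hi⟩ := Finsupp.ne_iff.mp this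
  simp only [Finsupp.coe_zero, Pi.zero_apply] at hi
  have hz : (0 : ZMod 3) ^ d i = 0 := zero_pow hi
  rw [Finset.prod_eq_zero (Finsupp.mem_support_iff.mpr hi) hz, mul_zero]

lemma aeval_apply_eq_eval (v : Fin 5 → ZMod 3) (x : MvPolynomial (Fin 5) (ZMod 3)) :
    aeval v x = eval v x := by
  rw [← coe_aeval_eq_eval]; rfl

lemma eval_aeval' (g : Fin 2 → MvPolynomial (Fin 5) (ZMod 3)) (v : Fin 5 → ZMod 3)
    (P : MvPolynomial (Fin 2) (ZMod 3)) :
    eval v (aeval g P) = eval (fun j => eval v (g j)) P := by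
  rw [← aeval_apply_eq_eval, comp_aeval_apply]
  simp only [aeval_apply_eq_eval]
  rw [← coe_aeval_eq_eval]; rfl

def yv : Fin 5 → ZMod 3 := ![2, 1, 0, 2, 1]

/-- in 𝔽₃[x₁,…,x₅], for every homogeneous polynomial P(X,Y) of degree 2, the
polynomial c − Σ_{i=1}^{5} (−1)^{i−1} P(x_i, y_i(x)) is nonzero; hence the hexagon 4-cocycle
e²+2d²+2bd+ad+c²+bc+2ac is cohomologically nontrivial and H⁴_{3,2} ≠ 0. -/
theorem statement19 (P : MvPolynomial (Fin 2) (ZMod 3)) (hP : P.IsHomogeneous 2) :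
    coc - ∑ i : Fin 5,
        (-1 : MvPolynomial (Fin 5) (ZMod 3)) ^ (i : ℕ) * aeval ![X i, yPoly 3 i] P ≠ 0 := by
  intro h
  have h2 := congrArg (eval vpt) h
  rw [map_sub, map_sum] at h2
  have hev : ∀ i : Fin 5, eval vpt (((-1 : MvPolynomial (Fin 5) (ZMod 3)) ^ (i : ℕ)) *
      aeval ![X i, yPoly 3 i] P) = (-1 : ZMod 3) ^ (i : ℕ) * eval ![vpt i, yv i] P := by
    intro i
    rw [map_mul, map_pow, map_neg, map_one, eval_aeval']
    have hfun : (fun j => eval vpt (![X i, yPoly 3 i] j)) = ![vpt i, yv i] := by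
      funext j
      fin_cases j
      · simp
      · show eval vpt (yPoly 3 i) = yv i
        fin_cases i
        all_goals simp [yPoly, Rmat, vpt, yv, Fin.sum_univ_five]
        all_goals decide
    rw [hfun]
  simp only [hev, Fin.sum_univ_five] at h2
  have hcoc : eval vpt coc = 1 := by simp [coc, vpt]
  have h00 : eval ![(0 : ZMod 3), 0] P = 0 := by
    have : (![(0 : ZMod 3), 0]) = (fun _ => (0 : ZMod 3)) := by
      funext j; fin_cases j <;> rfl
    rw [this]; exact eval_zero_of_hom P hP
  simp [vpt, yv, hcoc, h00] at h2
  rw [show (![0, 1, 0, 0, 1] : Fin 5 → ZMod 3) = vpt from rfl, hcoc] at h2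
  norm_num at h2
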